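/- Let L ≥ 1 be an integer, Z > 0 a real number, and Δ = 2Z/(2^L − 1). Let b₁,…,b_L ∈ {0,1} be fixed bits and let X₁,…,X_L be independent Bernoulli random variables with P(X_ν = 1) = ϱ for some ϱ ∈ [0,1]. Define the received bits B_ν = X_ν(1−b_ν) + (1−X_ν)b_ν, the encoded value Q = −Z + Σ_{ν=1}^{L} b_ν 2^{ν−1} Δ, and the decoded value Q° = −Z + Σ_{ν=1}^{L} B_ν 2^{ν−1} Δ. Then E[Q°] = (1 − 2ϱ) Q. -/

import Mathlib

open MeasureTheory ProbabilityTheory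

/-- Mean of the decoded output of a binary encoding-decoding scheme over a memoryless
binary symmetric channel: if the bits `b ν ∈ {0,1}` of the encoded value
`Q = -Z + Σ_ν b ν 2^ν Δ` are independently flipped with crossover probability `ϱ`,
yielding received bits `B ν = X ν (1 - b ν) + (1 - X ν) b ν` and decoded value
`Q° = -Z + Σ_ν B ν 2^ν Δ`, then `E[Q°] = (1 - 2 ϱ) Q`. -/
theorem decoded_output_mean
    {Ω : Type*} [MeasurableSpace Ω] (μ : Measure Ω) [IsProbabilityMeasure μ]
    (L : ℕ) (hL : 1 ≤ L) (Z : ℝ) (hZ : 0 < Z)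
    (Δ : ℝ) (hΔ : Δ = 2 * Z / (2 ^ L - 1))
    (b : Fin L → ℝ) (hb : ∀ ν, b ν = 0 ∨ b ν = 1)
    (ϱ : ℝ) (hϱ0 : 0 ≤ ϱ) (hϱ1 : ϱ ≤ 1)
    (X : Fin L → Ω → ℝ) (hXm : ∀ ν, Measurable (X ν))
    (hXval : ∀ ν ω, X ν ω = 0 ∨ X ν ω = 1)
    (hX1 : ∀ ν, μ {ω | X ν ω = 1} = ENNReal.ofReal ϱ)
    (hXindep : iIndepFun X μ)
    (B : Fin L → Ω → ℝ)
    (hB : ∀ ν ω, B ν ω = X ν ω * (1 - b ν) + (1 - X ν ω) * b ν)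
    (Q : ℝ) (hQ : Q = -Z + ∑ ν : Fin L, b ν * 2 ^ (ν : ℕ) * Δ) :
    ∫ ω, (-Z + ∑ ν : Fin L, B ν ω * 2 ^ (ν : ℕ) * Δ) ∂μ = (1 - 2 * ϱ) * Q := by
  -- X ν is the indicator of the set where it equals 1
  have hA : ∀ ν, MeasurableSet {ω | X ν ω = 1} := fun ν =>
    (hXm ν) (measurableSet_singleton 1)
  have hXeq : ∀ ν, X ν = Set.indicator {ω | X ν ω = 1} (fun _ => (1 : ℝ)) := by
    intro ν; funext ω
    rcases hXval ν ω with h | h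
    · rw [h, Set.indicator_of_notMem]
      simp [Set.mem_setOf_eq, h]
    · rw [h, Set.indicator_of_mem]
      exact h
  have hXint : ∀ ν, Integrable (X ν) μ := by
    intro ν
    rw [hXeq ν]
    exact (integrable_indicator_iff (hA ν)).2 (integrableOn_const (measure_ne_top μ _))
  have hXE : ∀ ν, ∫ ω, X ν ω ∂μ = ϱ := by
    intro ν
    rw [hXeq ν]
    rw [integral_indicator_const (1 : ℝ) (hA ν), measureReal_def, hX1 ν]
    simp [ENNReal.toReal_ofReal hϱ0]
  have hBeq : ∀ ν, B ν = fun ω => b ν + X ν ω * (1 - 2 * b ν) := by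
    intro ν; funext ω; rw [hB ν ω]; ring
  have hBint : ∀ ν, Integrable (B ν) μ := by
    intro ν
    rw [hBeq ν]
    exact (integrable_const _).add ((hXint ν).mul_const _)
  have hBE : ∀ ν, ∫ ω, B ν ω ∂μ = ϱ * (1 - b ν) + (1 - ϱ) * b ν := by
    intro ν
    rw [hBeq ν,
      integral_add (integrable_const _) ((hXint ν).mul_const _),
      integral_mul_const, integral_const, hXE ν]
    simp only [probReal_univ, smul_eq_mul, one_mul]
    ring
  -- compute the integral
  have hint : ∫ ω, (-Z + ∑ ν : Fin L, B ν ω * 2 ^ (ν : ℕ) * Δ) ∂μ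
      = -Z + ∑ ν : Fin L, (ϱ * (1 - b ν) + (1 - ϱ) * b ν) * 2 ^ (ν : ℕ) * Δ := by
    rw [integral_add (integrable_const _)
      (integrable_finset_sum _ (fun ν _ => ((hBint ν).mul_const _).mul_const _)),
      integral_const, integral_finset_sum _ (fun ν _ => ((hBint ν).mul_const _).mul_const _)]
    simp only [integral_mul_const, hBE]
    simp
  rw [hint]
  -- geometric sum
  have hpow : (1 : ℝ) < 2 ^ L := by
    have : (1 : ℝ) = 2 ^ 0 := by norm_num
    rw [this]
    exact pow_lt_pow_right₀ (by norm_num) (by omega)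
  have hne : (2 : ℝ) ^ L - 1 ≠ 0 := by linarith
  have hsum : ∑ ν : Fin L, (2 : ℝ) ^ (ν : ℕ) = 2 ^ L - 1 := by
    rw [Fin.sum_univ_eq_sum_range (fun i => (2 : ℝ) ^ i)]
    rw [geom_sum_eq (by norm_num : (2 : ℝ) ≠ 1)]
    ring
  have hΔsum : ∑ ν : Fin L, (2 : ℝ) ^ (ν : ℕ) * Δ = 2 * Z := by
    rw [← Finset.sum_mul, hsum, hΔ]
    field_simp
  have hsplit : ∑ ν : Fin L, (ϱ * (1 - b ν) + (1 - ϱ) * b ν) * 2 ^ (ν : ℕ) * Δ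
      = ϱ * (∑ ν : Fin L, (2 : ℝ) ^ (ν : ℕ) * Δ)
        + (1 - 2 * ϱ) * ∑ ν : Fin L, b ν * 2 ^ (ν : ℕ) * Δ := by
    rw [Finset.mul_sum, Finset.mul_sum, ← Finset.sum_add_distrib]
    apply Finset.sum_congr rfl
    intro ν _
    ring
  rw [hsplit, hΔsum, hQ]
  ring
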